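/- Measure of the ergodic set: Fix ρ ∈ (1/2,1). There exist constants C = C(ρ) > 0 and C′ = C′(ρ) > 0 such that for all N ≥ 1: |ν̃_{ρ,N}(𝓔_N) − ρ(2−ρ)| ≤ C′·e^{−CN}, where ν̃_{ρ,N}(𝓔_N) = Σ_{η∈𝓔_N} (1/N) Σ_{x∈𝕋_N} W_ρ^N(τ_x η). Note that ρ(2−ρ) > 3/4 for ρ ∈ (1/2,1). -/

import Mathlib

open scoped BigOperators
open scoped Classical

namespace FEP

/-- A configuration of the facilitated exclusion process on the discrete torus `𝕋_N`. -/
abbrev Config (N : ℕ) := ZMod N → Bool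

/-- Number of particles of a configuration. -/
def numParticles {N : ℕ} [NeZero N] (η : Config N) : ℕ :=
  ∑ x : ZMod N, (if η x then 1 else 0)

/-- The ergodic set `𝓔_N`. -/
def ergodicSet (N : ℕ) [NeZero N] : Set (Config N) :=
  {η | (∀ x : ZMod N, η x = true ∨ η (x + 1) = true) ∧ N < 2 * numParticles η}

/-- The number of particles of `σ` in `Λ_ℓ = {1,…,ℓ}`. -/
def pcount (ℓ : ℕ) (σ : ℕ → Bool) : ℕ :=
  ∑ x ∈ Finset.Icc 1 ℓ, (if σ x then 1 else 0)

/-- The cylinder weight `W_ρ^ℓ(σ)` of the infinite-volume grand canonical measure `π_ρ`. -/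
noncomputable def W (ρ : ℝ) (ℓ : ℕ) (σ : ℕ → Bool) : ℝ :=
  if ∀ x ∈ Finset.Ico 1 ℓ, (σ x = true ∨ σ (x + 1) = true) then
    (1 - ρ) * ((1 - ρ) / ρ) ^ ((ℓ : ℤ) - 1 - (pcount ℓ σ : ℤ)) *
      ((2 * ρ - 1) / ρ) ^
        (2 * (pcount ℓ σ : ℤ) - (ℓ : ℤ) + 1 - (if σ 1 then 1 else 0) -
          (if σ ℓ then 1 else 0))
  else 0

/-- The translate `τ_x η` of a periodic configuration, viewed as a configuration on
`Λ_N = {1,…,N}`: `(τ_x η)(y) = η(x+y)`. -/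
def toSeg {N : ℕ} (x : ZMod N) (η : Config N) : ℕ → Bool :=
  fun y => η (x + (y : ZMod N))

/-- The translation-invariant weight `ν̃_{ρ,N}(η) = (1/N) Σ_x W_ρ^N(τ_x η)`. -/
noncomputable def nutilde (ρ : ℝ) (N : ℕ) [NeZero N] (η : Config N) : ℝ :=
  (1 / (N : ℝ)) * ∑ x : ZMod N, W ρ N (toSeg x η)

/-- The periodic grand canonical measure `ν_{ρ,N}`, the normalized restriction of `ν̃_{ρ,N}`
to the ergodic set `𝓔_N`. -/
noncomputable def nuP (ρ : ℝ) (N : ℕ) [NeZero N] (η : Config N) : ℝ :=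
  if η ∈ ergodicSet N then
    nutilde ρ N η /
      (∑ η' : Config N, if η' ∈ ergodicSet N then nutilde ρ N η' else 0)
  else 0

-- ===================== auxiliary development =====================

/-- transfer matrix of the stationary Markov chain underlying `π_ρ` -/
noncomputable def Pm (ρ : ℝ) : Bool → Bool → ℝ
  | false, false => 0
  | false, true => 1
  | true, false => (1 - ρ) / ρ
  | true, true => (2 * ρ - 1) / ρ

/-- initial (stationary) distribution -/
noncomputable def ini (ρ : ℝ) : Bool → ℝ
  | false => 1 - ρ
  | true => ρ

/-- `A ρ s n t = ini s ⬝ (Pm^n)_{s,t}` -/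
noncomputable def A (ρ : ℝ) (s : Bool) : ℕ → Bool → ℝ
  | 0 => fun t => if t = s then ini ρ s else 0
  | (n+1) => fun t => A ρ s n false * Pm ρ false t + A ρ s n true * Pm ρ true t

section rho
variable {ρ : ℝ} (hρ : ρ ∈ Set.Ioo (1/2 : ℝ) 1)
include hρ

lemma rho_pos : 0 < ρ := by have := hρ.1; have := hρ.2; norm_num at *; linarith
lemma one_sub_rho_pos : 0 < 1 - ρ := by have := hρ.2; linarith
lemma a_pos : 0 < (1 - ρ) / ρ := div_pos (one_sub_rho_pos hρ) (rho_pos hρ)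
lemma a_ne : (1 - ρ) / ρ ≠ 0 := ne_of_gt (a_pos hρ)
lemma a_lt_one : (1 - ρ) / ρ < 1 := by
  rw [div_lt_one (rho_pos hρ)]; have := hρ.1; norm_num at this; linarith
lemma b_pos : 0 < (2 * ρ - 1) / ρ := by
  apply div_pos _ (rho_pos hρ); have := hρ.1; norm_num at this; linarith
lemma b_ne : (2 * ρ - 1) / ρ ≠ 0 := ne_of_gt (b_pos hρ)
lemma b_lt_one : (2 * ρ - 1) / ρ < 1 := by
  rw [div_lt_one (rho_pos hρ)]; have := hρ.2; linarith

lemma W_nonneg (ℓ : ℕ) (σ : ℕ → Bool) : 0 ≤ W ρ ℓ σ := by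
  rw [W]
  split
  · apply mul_nonneg (mul_nonneg (le_of_lt (one_sub_rho_pos hρ)) _) _
    · exact le_of_lt (zpow_pos (a_pos hρ) _)
    · exact le_of_lt (zpow_pos (b_pos hρ) _)
  · exact le_refl 0
end rho

lemma W_one {ρ : ℝ} (h0 : ρ ≠ 0) (h1 : (1:ℝ) - ρ ≠ 0) (σ : ℕ → Bool) :
    W ρ 1 σ = ini ρ (σ 1) := by
  rw [W, if_pos (by simp)]
  have hp : pcount 1 σ = if σ 1 then 1 else 0 := by
    rw [pcount, Finset.Icc_self, Finset.sum_singleton]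
  cases h : σ 1 <;> simp [h, hp, ini] <;> field_simp

lemma W_succ {ρ : ℝ} (ha : (1 - ρ) / ρ ≠ 0) (hb : (2 * ρ - 1) / ρ ≠ 0)
    (σ : ℕ → Bool) (ℓ : ℕ) (hℓ : 1 ≤ ℓ)
    (h : ∀ x ∈ Finset.Ico 1 (ℓ+1), σ x = true ∨ σ (x + 1) = true) :
    W ρ (ℓ+1) σ = W ρ ℓ σ * Pm ρ (σ ℓ) (σ (ℓ+1)) := by
  have it1 : (if true = true then (1:ℤ) else 0) = 1 := rfl
  have it0 : (if false = true then (1:ℤ) else 0) = 0 := rfl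
  have h' : ∀ x ∈ Finset.Ico 1 ℓ, σ x = true ∨ σ (x + 1) = true := by
    intro x hx
    exact h x (by simp only [Finset.mem_Ico] at hx ⊢; omega)
  have hp : pcount (ℓ+1) σ = pcount ℓ σ + (if σ (ℓ+1) then 1 else 0) := by
    rw [pcount, Finset.sum_Icc_succ_top (by omega), pcount]
  have hlast : σ ℓ = true ∨ σ (ℓ+1) = true := h ℓ (by simp only [Finset.mem_Ico]; omega)
  rw [W, W, if_pos h, if_pos h']
  set p : ℤ := (pcount ℓ σ : ℤ) with hpz
  set s1 : ℤ := (if σ 1 then 1 else 0 : ℤ) with hs1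
  cases hl : σ ℓ <;> cases hl1 : σ (ℓ+1)
  · rw [hl, hl1] at hlast; simp at hlast
  · -- (ff, tt)
    have hpc : ((pcount (ℓ+1) σ : ℕ) : ℤ) = p + 1 := by rw [hp, hl1]; push_cast; simp; exact hpz.symm
    rw [hpc, it1, it0]
    rw [show ((ℓ+1:ℕ):ℤ) - 1 - (p+1) = (ℓ:ℤ) - 1 - p from by push_cast; ring]
    rw [show 2*(p+1) - ((ℓ+1:ℕ):ℤ) + 1 - s1 - 1 = 2*p - (ℓ:ℤ) + 1 - s1 - 0 from by push_cast; ring]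
    simp [Pm]
  · -- (tt, ff)
    have hpc : ((pcount (ℓ+1) σ : ℕ) : ℤ) = p := by rw [hp, hl1]; push_cast; simp; exact hpz.symm
    rw [hpc, it1, it0]
    rw [show ((ℓ+1:ℕ):ℤ) - 1 - p = ((ℓ:ℤ) - 1 - p) + 1 from by push_cast; ring]
    rw [show 2*p - ((ℓ+1:ℕ):ℤ) + 1 - s1 - 0 = 2*p - (ℓ:ℤ) + 1 - s1 - 1 from by push_cast; ring]
    rw [zpow_add_one₀ ha]
    simp only [Pm]; ring
  · -- (tt, tt)
    have hpc : ((pcount (ℓ+1) σ : ℕ) : ℤ) = p + 1 := by rw [hp, hl1]; push_cast; simp; exact hpz.symm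
    rw [hpc, it1]
    rw [show ((ℓ+1:ℕ):ℤ) - 1 - (p+1) = (ℓ:ℤ) - 1 - p from by push_cast; ring]
    rw [show 2*(p+1) - ((ℓ+1:ℕ):ℤ) + 1 - s1 - 1 = (2*p - (ℓ:ℤ) + 1 - s1 - 1) + 1 from by push_cast; ring]
    rw [zpow_add_one₀ hb]
    simp only [Pm]; ring

lemma W_prod {ρ : ℝ} (h0 : ρ ≠ 0) (h1 : (1:ℝ) - ρ ≠ 0)
    (ha : (1 - ρ) / ρ ≠ 0) (hb : (2 * ρ - 1) / ρ ≠ 0)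
    (σ : ℕ → Bool) (N : ℕ) (hN : 1 ≤ N) :
    W ρ N σ = ini ρ (σ 1) * ∏ x ∈ Finset.Ico 1 N, Pm ρ (σ x) (σ (x+1)) := by
  induction N, hN using Nat.le_induction with
  | base => simp [W_one h0 h1]
  | succ ℓ hℓ ih =>
    by_cases hc : ∀ x ∈ Finset.Ico 1 (ℓ+1), σ x = true ∨ σ (x + 1) = true
    · rw [W_succ ha hb σ ℓ hℓ hc, ih, Finset.prod_Ico_succ_top (by omega)]
      ring
    · rw [W, if_neg hc]
      push_neg at hc
      obtain ⟨x, hx, hx1, hx2⟩ := hc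
      have hx1' : σ x = false := by simpa using hx1
      have hx2' : σ (x+1) = false := by simpa using hx2
      rw [Finset.prod_eq_zero hx (by rw [hx1', hx2']; rfl)]
      ring

/-- snoc equivalence -/
def snocEquiv (n : ℕ) : ((Fin (n+1) → Bool) × Bool) ≃ (Fin (n+2) → Bool) where
  toFun p := Fin.snoc p.1 p.2
  invFun v := (Fin.init v, v (Fin.last _))
  left_inv p := by
    ext i
    · simp [Fin.init_snoc]
    · simp
  right_inv v := by simp [Fin.snoc_init_self]

lemma chain (ρ : ℝ) : ∀ (n : ℕ) (g : Bool → Bool → ℝ),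
    (∑ v : Fin (n+1) → Bool,
      g (v 0) (v (Fin.last n)) * (ini ρ (v 0) * ∏ i : Fin n, Pm ρ (v i.castSucc) (v i.succ)))
    = ∑ s : Bool, ∑ t : Bool, g s t * A ρ s n t := by
  intro n
  induction n with
  | zero =>
    intro g
    rw [← Equiv.sum_comp (Equiv.funUnique (Fin 1) Bool).symm]
    simp [A, Fintype.sum_bool, ini]
  | succ n ih =>
    intro g
    rw [← Equiv.sum_comp (snocEquiv n), Fintype.sum_prod_type]
    have key : ∀ (w : Fin (n+1) → Bool) (b : Bool),
        (fun v => g (v 0) (v (Fin.last (n+1))) *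
          (ini ρ (v 0) * ∏ i : Fin (n+1), Pm ρ (v i.castSucc) (v i.succ))) (snocEquiv n (w, b))
        = (g (w 0) b * Pm ρ (w (Fin.last n)) b) *
            (ini ρ (w 0) * ∏ i : Fin n, Pm ρ (w i.castSucc) (w i.succ)) := by
      intro w b
      have h0 : (snocEquiv n (w, b)) 0 = w 0 := by
        simp only [snocEquiv, Equiv.coe_fn_mk]
        rw [show (0 : Fin (n+2)) = (0 : Fin (n+1)).castSucc from rfl, Fin.snoc_castSucc]
      have hlast : (snocEquiv n (w, b)) (Fin.last (n+1)) = b := by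
        simp only [snocEquiv, Equiv.coe_fn_mk]
        exact Fin.snoc_last _ _
      have hprod : ∏ i : Fin (n+1), Pm ρ ((snocEquiv n (w, b)) i.castSucc) ((snocEquiv n (w, b)) i.succ)
          = (∏ i : Fin n, Pm ρ (w i.castSucc) (w i.succ)) * Pm ρ (w (Fin.last n)) b := by
        rw [Fin.prod_univ_castSucc]
        congr 1
        · apply Finset.prod_congr rfl
          intro j _
          simp only [snocEquiv, Equiv.coe_fn_mk]
          rw [Fin.snoc_castSucc, Fin.succ_castSucc, Fin.snoc_castSucc]
        · simp only [snocEquiv, Equiv.coe_fn_mk]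
          rw [Fin.snoc_castSucc, Fin.succ_last, Fin.snoc_last]
      simp only [h0, hlast, hprod]
      ring
    calc ∑ w : Fin (n+1) → Bool, ∑ b : Bool,
          (fun v => g (v 0) (v (Fin.last (n+1))) *
            (ini ρ (v 0) * ∏ i : Fin (n+1), Pm ρ (v i.castSucc) (v i.succ))) (snocEquiv n (w, b))
        = ∑ b : Bool, ∑ w : Fin (n+1) → Bool,
            (fun s t => g s b * Pm ρ t b) (w 0) (w (Fin.last n)) *
              (ini ρ (w 0) * ∏ i : Fin n, Pm ρ (w i.castSucc) (w i.succ)) := by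
          rw [Finset.sum_comm]
          exact Finset.sum_congr rfl fun b _ => Finset.sum_congr rfl fun w _ => key w b
      _ = ∑ b : Bool, ∑ s : Bool, ∑ t : Bool, (g s b * Pm ρ t b) * A ρ s n t := by
          exact Finset.sum_congr rfl fun b _ => ih (fun s t => g s b * Pm ρ t b)
      _ = ∑ s : Bool, ∑ t : Bool, g s t * A ρ s (n+1) t := by
          rw [Finset.sum_comm]
          apply Finset.sum_congr rfl
          intro s _
          simp only [Fintype.sum_bool, A]
          ring

lemma A_sum {ρ : ℝ} (h0 : ρ ≠ 0) (s : Bool) : ∀ n : ℕ, A ρ s n false + A ρ s n true = ini ρ s := by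
  intro n
  induction n with
  | zero => cases s <;> simp [A]
  | succ n ih =>
    have hab : (1 - ρ)/ρ + (2*ρ-1)/ρ = 1 := by field_simp; ring
    simp only [A, Pm]
    linear_combination ih + (A ρ s n true) * hab

lemma A_ff {ρ : ℝ} (h0 : ρ ≠ 0) : ∀ n : ℕ,
    A ρ false n false = (1-ρ) * ((1-ρ) + ρ * (-((1-ρ)/ρ))^n) := by
  intro n
  induction n with
  | zero => simp [A, ini]
  | succ n ih =>
    have htt : A ρ false n true = (1-ρ) - A ρ false n false := by
      have := A_sum h0 false n
      simp only [ini] at this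
      linarith
    simp only [A, Pm, htt, ih, pow_succ]
    field_simp
    ring

/-- Sum over `Icc 1 N` of `g (x mod N)` equals sum over `ZMod N`. -/
lemma sum_Icc_zmod {M : Type*} [AddCommMonoid M] (N : ℕ) [NeZero N] (g : ZMod N → M) :
    ∑ x ∈ Finset.Icc 1 N, g ((x : ℕ) : ZMod N) = ∑ z : ZMod N, g z := by
  have h1 : Finset.Icc 1 N = Finset.Ico 1 (N+1) := by
    ext x; simp [Finset.mem_Icc, Finset.mem_Ico]
  rw [h1, Finset.sum_Ico_eq_sum_range]
  simp only [Nat.add_sub_cancel]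
  apply Finset.sum_nbij' (i := fun i => ((1 + i : ℕ) : ZMod N)) (j := fun z => (z - 1).val)
  · intro i _; exact Finset.mem_univ _
  · intro z _
    simp only [Finset.mem_range]
    exact ZMod.val_lt _
  · intro i hi
    simp only [Finset.mem_range] at hi
    have : ((1 + i : ℕ) : ZMod N) - 1 = (i : ZMod N) := by push_cast; ring
    rw [this, ZMod.val_natCast_of_lt hi]
  · intro z _
    have : (((z - 1).val : ℕ) : ZMod N) = z - 1 := ZMod.natCast_rightInverse _
    push_cast
    rw [this]; ring
  · intro i _; rfl

/-- The reindexing equivalence `Config N ≃ (Fin N → Bool)`, `v i = η (i+1)`. -/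
def phiEquiv (N : ℕ) [NeZero N] : (ZMod N → Bool) ≃ (Fin N → Bool) where
  toFun η i := η (((i : ℕ) : ZMod N) + 1)
  invFun v z := v ⟨(z - 1).val, ZMod.val_lt _⟩
  left_inv η := by
    funext z
    simp only
    congr 1
    rw [ZMod.natCast_rightInverse _]
    ring
  right_inv v := by
    funext i
    simp only
    congr 1
    apply Fin.ext
    simp only
    have : ((i : ℕ) : ZMod N) + 1 - 1 = ((i : ℕ) : ZMod N) := by ring
    rw [this, ZMod.val_natCast_of_lt i.isLt]

lemma numParticles_eq_card {N : ℕ} [NeZero N] (η : Config N) :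
    numParticles η = (Finset.univ.filter (fun x => η x = true)).card := by
  simp [numParticles, Finset.sum_boole]

section density
variable {N : ℕ} [NeZero N] (η : Config N)

lemma card_split :
    (Finset.univ.filter (fun x : ZMod N => η x = false)).card
      + (Finset.univ.filter (fun x : ZMod N => η x = true)).card = N := by
  classical
  have h := Finset.card_filter_add_card_filter_not
    (s := (Finset.univ : Finset (ZMod N))) (p := fun x => η x = true)
  rw [Finset.card_univ, ZMod.card] at h
  have e : (Finset.univ.filter (fun x : ZMod N => η x = false))
      = (Finset.univ.filter (fun x : ZMod N => ¬ η x = true)) := by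
    apply Finset.filter_congr; intro x _; simp
  rw [e]
  omega

lemma zeros_image_subset (h : ∀ x : ZMod N, η x = true ∨ η (x + 1) = true) :
    ((Finset.univ.filter (fun x : ZMod N => η x = false)).image (fun x => x + 1))
      ⊆ Finset.univ.filter (fun x : ZMod N => η x = true) := by
  intro y hy
  simp only [Finset.mem_image, Finset.mem_filter, Finset.mem_univ, true_and] at hy ⊢
  obtain ⟨x, hx, rfl⟩ := hy
  rcases h x with h' | h'
  · rw [hx] at h'; exact absurd h' (by simp)
  · exact h'

lemma zeros_card_eq :
    ((Finset.univ.filter (fun x : ZMod N => η x = false)).image (fun x => x + 1)).card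
      = (Finset.univ.filter (fun x : ZMod N => η x = false)).card :=
  Finset.card_image_of_injOn (fun x _ y _ hxy => by
    have : x + 1 - 1 = y + 1 - 1 := by rw [hxy]
    simpa using this)

lemma torus_density (h : ∀ x : ZMod N, η x = true ∨ η (x + 1) = true) :
    N ≤ 2 * numParticles η := by
  have h1 := card_split η
  have h2 := Finset.card_le_card (zeros_image_subset η h)
  rw [zeros_card_eq η] at h2
  rw [numParticles_eq_card]
  omega

lemma alternating (h : ∀ x : ZMod N, η x = true ∨ η (x + 1) = true)
    (hle : 2 * numParticles η ≤ N) :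
    ∀ x : ZMod N, η (x + 1) = ! η x := by
  have h1 := card_split η
  have h2 := Finset.card_le_card (zeros_image_subset η h)
  rw [zeros_card_eq η] at h2
  rw [numParticles_eq_card] at hle
  have hcards : (Finset.univ.filter (fun x : ZMod N => η x = true)).card
      ≤ ((Finset.univ.filter (fun x : ZMod N => η x = false)).image (fun x => x + 1)).card := by
    rw [zeros_card_eq η]; omega
  have heq := Finset.eq_of_subset_of_card_le (zeros_image_subset η h) hcards
  have hpre : ∀ y : ZMod N, η y = true → η (y - 1) = false := by
    intro y hy
    have : y ∈ Finset.univ.filter (fun x : ZMod N => η x = true) := by simp [hy]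
    rw [← heq] at this
    simp only [Finset.mem_image, Finset.mem_filter, Finset.mem_univ, true_and] at this
    obtain ⟨x, hx, rfl⟩ := this
    simpa using hx
  intro x
  cases hx : η x
  · simp only [Bool.not_false]
    rcases h x with h' | h'
    · rw [hx] at h'; exact absurd h' (by simp)
    · exact h'
  · simp only [Bool.not_true]
    cases hx1 : η (x + 1)
    · rfl
    · exfalso
      have := hpre (x+1) hx1
      simp only [add_sub_cancel_right] at this
      rw [hx] at this
      exact absurd this (by simp)

lemma alternating_ext {η η' : Config N}
    (ha : ∀ x : ZMod N, η (x + 1) = ! η x) (ha' : ∀ x : ZMod N, η' (x + 1) = ! η' x)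
    (h0 : η 0 = η' 0) : η = η' := by
  have key : ∀ n : ℕ, η ((n : ℕ) : ZMod N) = η' ((n : ℕ) : ZMod N) := by
    intro n
    induction n with
    | zero => simpa using h0
    | succ n ih =>
      have e : (((n+1 : ℕ)) : ZMod N) = ((n : ℕ) : ZMod N) + 1 := by push_cast; ring
      rw [e, ha, ha', ih]
  funext z
  have := key z.val
  rwa [ZMod.natCast_rightInverse _] at this

end density

/-- shift equivalence on configurations -/
def shiftEquiv {N : ℕ} (x : ZMod N) : (ZMod N → Bool) ≃ (ZMod N → Bool) where
  toFun η y := η (x + y)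
  invFun η y := η (-x + y)
  left_inv η := by funext y; simp
  right_inv η := by funext y; simp

lemma sum_nutilde (ρ : ℝ) (N : ℕ) [NeZero N] :
    (∑ η : Config N, if η ∈ ergodicSet N then nutilde ρ N η else 0)
    = ∑ η : Config N, (if η ∈ ergodicSet N then W ρ N (toSeg 0 η) else 0) := by
  have hNne : (N:ℝ) ≠ 0 := Nat.cast_ne_zero.mpr (NeZero.ne N)
  have hpt : ∀ η : Config N, (if η ∈ ergodicSet N then nutilde ρ N η else 0)
      = (1/(N:ℝ)) * ∑ x : ZMod N, (if η ∈ ergodicSet N then W ρ N (toSeg x η) else 0) := by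
    intro η
    by_cases hη : η ∈ ergodicSet N
    · simp only [hη, if_pos, nutilde]
    · simp [hη]
  rw [Finset.sum_congr rfl (fun η _ => hpt η), ← Finset.mul_sum, Finset.sum_comm]
  have hx : ∀ x : ZMod N, (∑ η : Config N, if η ∈ ergodicSet N then W ρ N (toSeg x η) else 0)
      = ∑ η : Config N, (if η ∈ ergodicSet N then W ρ N (toSeg 0 η) else 0) := by
    intro x
    rw [← Equiv.sum_comp (shiftEquiv x)
      (fun η => if η ∈ ergodicSet N then W ρ N (toSeg 0 η) else 0)]
    apply Finset.sum_congr rfl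
    intro η _
    have hts : toSeg 0 (shiftEquiv x η) = toSeg x η := by
      funext y
      simp [toSeg, shiftEquiv]
    have herg : shiftEquiv x η ∈ ergodicSet N ↔ η ∈ ergodicSet N := by
      have hnum : numParticles (shiftEquiv x η) = numParticles η := by
        rw [numParticles, numParticles]
        exact Equiv.sum_comp (Equiv.addLeft x) (fun z => if η z then 1 else 0)
      constructor
      · rintro ⟨hp, hn⟩
        refine ⟨?_, by rwa [hnum] at hn⟩
        intro z
        have h2 := hp (-x + z)
        simp only [shiftEquiv, Equiv.coe_fn_mk] at h2
        rw [show x + (-x + z) = z from by ring, show x + (-x + z + 1) = z + 1 from by ring] at h2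
        exact h2
      · rintro ⟨hp, hn⟩
        refine ⟨?_, by rwa [hnum]⟩
        intro z
        simp only [shiftEquiv, Equiv.coe_fn_mk]
        have h2 := hp (x + z)
        rw [show x + z + 1 = x + (z + 1) from by ring] at h2
        exact h2
    rw [hts]
    by_cases hη : η ∈ ergodicSet N
    · rw [if_pos hη, if_pos (herg.mpr hη)]
    · rw [if_neg hη, if_neg (fun hh => hη (herg.mp hh))]
  rw [Finset.sum_congr rfl (fun x _ => hx x), Finset.sum_const, Finset.card_univ, ZMod.card,
    nsmul_eq_mul, ← mul_assoc, one_div_mul_cancel hNne, one_mul]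

lemma main_sum {ρ : ℝ} (hρ : ρ ∈ Set.Ioo (1/2 : ℝ) 1) (N : ℕ) [NeZero N] (hN : 1 ≤ N) :
    (∑ η : Config N, if (∀ x : ZMod N, η x = true ∨ η (x+1) = true)
        then W ρ N (toSeg 0 η) else 0)
    = ρ*(2-ρ) - ρ*(1-ρ)*(-((1-ρ)/ρ))^(N-1) := by
  have h0 : ρ ≠ 0 := ne_of_gt (rho_pos hρ)
  have h1 : (1:ℝ) - ρ ≠ 0 := ne_of_gt (one_sub_rho_pos hρ)
  obtain ⟨n, rfl⟩ : ∃ n, N = n + 1 := ⟨N - 1, by omega⟩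
  have hseg : ∀ (η : Config (n+1)) (x : ℕ),
      toSeg (0 : ZMod (n+1)) η x = η ((x : ℕ) : ZMod (n+1)) := by
    intro η x; simp [toSeg]
  have step1 : ∀ η : Config (n+1),
      (if (∀ x : ZMod (n+1), η x = true ∨ η (x+1) = true) then W ρ (n+1) (toSeg 0 η) else 0)
      = (if (η 1 = true ∨ η 0 = true) then (1:ℝ) else 0) * W ρ (n+1) (toSeg 0 η) := by
    intro η
    by_cases ht : ∀ x : ZMod (n+1), η x = true ∨ η (x+1) = true
    · rw [if_pos ht, if_pos, one_mul]
      rcases ht 0 with h | h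
      · right; exact h
      · left; rwa [zero_add] at h
    · rw [if_neg ht]
      by_cases hw : η 1 = true ∨ η 0 = true
      · rw [if_pos hw, one_mul]
        push_neg at ht
        obtain ⟨x, hx1, hx2⟩ := ht
        have hx1' : η x = false := by simpa using hx1
        have hx2' : η (x+1) = false := by simpa using hx2
        have hx0 : x ≠ 0 := by
          rintro rfl
          rw [zero_add] at hx2'
          rcases hw with h | h
          · rw [hx2'] at h; simp at h
          · rw [hx1'] at h; simp at h
        rw [W, if_neg]
        push_neg
        refine ⟨x.val, ?_, ?_, ?_⟩
        · simp only [Finset.mem_Ico]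
          have hne : x.val ≠ 0 := fun hh => hx0 ((ZMod.val_eq_zero x).mp hh)
          have := ZMod.val_lt x
          omega
        · rw [hseg, ZMod.natCast_rightInverse x]
          simp [hx1']
        · rw [hseg]
          have : (((x.val + 1 : ℕ)) : ZMod (n+1)) = x + 1 := by
            push_cast
            rw [ZMod.natCast_rightInverse x]
          rw [this]
          simp [hx2']
      · rw [if_neg hw, zero_mul]
  rw [Finset.sum_congr rfl (fun η _ => step1 η)]
  have step2 : ∀ η : Config (n+1),
      (if (η 1 = true ∨ η 0 = true) then (1:ℝ) else 0) * W ρ (n+1) (toSeg 0 η)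
      = (fun v : Fin (n+1) → Bool =>
          (if (v 0 = true ∨ v (Fin.last n) = true) then (1:ℝ) else 0) *
            (ini ρ (v 0) * ∏ i : Fin n, Pm ρ (v i.castSucc) (v i.succ))) (phiEquiv (n+1) η) := by
    intro η
    simp only
    have hv : ∀ i : Fin (n+1), (phiEquiv (n+1) η) i = η (((i:ℕ) : ZMod (n+1)) + 1) :=
      fun _ => rfl
    have hv0 : (phiEquiv (n+1) η) 0 = η 1 := by
      rw [hv]
      norm_num
    have hvlast : (phiEquiv (n+1) η) (Fin.last n) = η 0 := by
      rw [hv]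
      congr 1
      have e1 : ((Fin.last n : Fin (n+1)) : ℕ) = n := rfl
      rw [e1]
      have e2 : ((n : ℕ) : ZMod (n+1)) + 1 = (((n+1 : ℕ)) : ZMod (n+1)) := by push_cast; ring
      rw [e2, ZMod.natCast_self]
    rw [hv0, hvlast]
    congr 1
    rw [W_prod h0 h1 (a_ne hρ) (b_ne hρ) _ (n+1) (by omega)]
    congr 1
    · rw [hseg]
      norm_num
    · have hL : ∏ x ∈ Finset.Ico 1 (n+1), Pm ρ (toSeg 0 η x) (toSeg 0 η (x+1))
          = ∏ k ∈ Finset.range n,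
              Pm ρ (η (((k:ℕ) : ZMod (n+1)) + 1)) (η (((k:ℕ) : ZMod (n+1)) + 1 + 1)) := by
        rw [Finset.prod_Ico_eq_prod_range]
        simp only [Nat.add_sub_cancel]
        apply Finset.prod_congr rfl
        intro k _
        rw [hseg, hseg]
        have e1 : ((1 + k : ℕ) : ZMod (n+1)) = ((k:ℕ) : ZMod (n+1)) + 1 := by push_cast; ring
        have e2 : ((1 + k + 1 : ℕ) : ZMod (n+1)) = ((k:ℕ) : ZMod (n+1)) + 1 + 1 := by
          push_cast; ring
        rw [e1, e2]
      have hR : ∏ i : Fin n, Pm ρ ((phiEquiv (n+1) η) i.castSucc) ((phiEquiv (n+1) η) i.succ)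
          = ∏ k ∈ Finset.range n,
              Pm ρ (η (((k:ℕ) : ZMod (n+1)) + 1)) (η (((k:ℕ) : ZMod (n+1)) + 1 + 1)) := by
        rw [← Fin.prod_univ_eq_prod_range
          (fun k => Pm ρ (η (((k:ℕ) : ZMod (n+1)) + 1)) (η (((k:ℕ) : ZMod (n+1)) + 1 + 1))) n]
        apply Finset.prod_congr rfl
        intro i _
        rw [hv, hv]
        have e1 : (((i.castSucc : Fin (n+1)) : ℕ) : ZMod (n+1)) = ((i : ℕ) : ZMod (n+1)) := by
          rw [Fin.coe_castSucc]
        have e2 : (((i.succ : Fin (n+1)) : ℕ) : ZMod (n+1)) = ((i : ℕ) : ZMod (n+1)) + 1 := by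
          rw [Fin.val_succ]; push_cast; ring
        rw [e1, e2]
      rw [hL, hR]
  have hfin : (∑ η : Config (n+1),
      (if (η 1 = true ∨ η 0 = true) then (1:ℝ) else 0) * W ρ (n+1) (toSeg 0 η))
      = ∑ v : Fin (n+1) → Bool,
          (fun s t => if (s = true ∨ t = true) then (1:ℝ) else 0) (v 0) (v (Fin.last n)) *
            (ini ρ (v 0) * ∏ i : Fin n, Pm ρ (v i.castSucc) (v i.succ)) := by
    rw [← Equiv.sum_comp (phiEquiv (n+1)) (fun v : Fin (n+1) → Bool =>
      (fun s t => if (s = true ∨ t = true) then (1:ℝ) else 0) (v 0) (v (Fin.last n)) *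
        (ini ρ (v 0) * ∏ i : Fin n, Pm ρ (v i.castSucc) (v i.succ)))]
    exact Finset.sum_congr rfl (fun η _ => step2 η)
  rw [hfin, chain ρ n (fun s t => if (s = true ∨ t = true) then (1:ℝ) else 0)]
  have hAt := A_sum h0 true n
  have hAf := A_sum h0 false n
  have hAff := A_ff h0 n
  simp only [ini] at hAt hAf
  simp only [Fintype.sum_bool]
  norm_num
  linear_combination hAt + hAf - hAff

lemma bad_le {ρ : ℝ} (hρ : ρ ∈ Set.Ioo (1/2:ℝ) 1) (N : ℕ) [NeZero N] (hN : 1 ≤ N) :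
    (∑ η : Config N, if ((∀ x : ZMod N, η x = true ∨ η (x+1) = true) ∧ 2 * numParticles η ≤ N)
        then W ρ N (toSeg 0 η) else 0)
    ≤ 2 * ((1-ρ) * ((1-ρ)/ρ)⁻¹ * ((2*ρ-1)/ρ)⁻¹) * (Real.sqrt ((1-ρ)/ρ))^N := by
  classical
  have h0 : ρ ≠ 0 := ne_of_gt (rho_pos hρ)
  have hseg : ∀ (η : Config N) (x : ℕ), toSeg (0 : ZMod N) η x = η ((x : ℕ) : ZMod N) := by
    intro η x; simp [toSeg]
  set r := Real.sqrt ((1-ρ)/ρ) with hr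
  have hr2 : r^2 = (1-ρ)/ρ := Real.sq_sqrt (le_of_lt (a_pos hρ))
  have hrpos : 0 < r := Real.sqrt_pos.mpr (a_pos hρ)
  set K := (1-ρ) * ((1-ρ)/ρ)⁻¹ * ((2*ρ-1)/ρ)⁻¹ * r^N with hK
  have hKnonneg : 0 ≤ K := by
    apply mul_nonneg (mul_nonneg (mul_nonneg _ _) _) _
    · linarith [one_sub_rho_pos hρ]
    · exact le_of_lt (inv_pos.mpr (a_pos hρ))
    · exact le_of_lt (inv_pos.mpr (b_pos hρ))
    · positivity
  rw [← Finset.sum_filter]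
  set Bad := Finset.univ.filter (fun η : Config N =>
    (∀ x : ZMod N, η x = true ∨ η (x+1) = true) ∧ 2 * numParticles η ≤ N) with hBad
  have hcard : Bad.card ≤ 2 := by
    have hc2 : Bad.card ≤ (Finset.univ : Finset Bool).card := by
      apply Finset.card_le_card_of_injOn (fun η => η 0)
      · intro η _; exact Finset.mem_univ _
      · intro η hη η' hη' hval
        simp only [hBad, Finset.coe_filter, Set.mem_setOf_eq, Finset.mem_univ, true_and]
          at hη hη'
        exact alternating_ext (alternating η hη.1 hη.2) (alternating η' hη'.1 hη'.2) hval
    simpa using hc2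
  have hWle : ∀ η ∈ Bad, W ρ N (toSeg 0 η) ≤ K := by
    intro η hη
    simp only [hBad, Finset.mem_filter, Finset.mem_univ, true_and] at hη
    obtain ⟨ht, hle⟩ := hη
    have hp2 : 2 * numParticles η = N := le_antisymm hle (torus_density η ht)
    set p := numParticles η with hpdef
    have hp1 : 1 ≤ p := by omega
    have hcond : ∀ x ∈ Finset.Ico 1 N,
        toSeg (0:ZMod N) η x = true ∨ toSeg (0:ZMod N) η (x+1) = true := by
      intro x _
      rw [hseg, hseg]
      have hh := ht ((x : ℕ) : ZMod N)
      rwa [show ((x:ℕ) : ZMod N) + 1 = (((x+1:ℕ)) : ZMod N) from by push_cast; ring] at hh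
    have hq : pcount N (toSeg 0 η) = p := by
      rw [pcount]
      rw [show (∑ x ∈ Finset.Icc 1 N, if toSeg (0:ZMod N) η x then 1 else 0)
          = ∑ x ∈ Finset.Icc 1 N, (fun z : ZMod N => if η z then 1 else 0) ((x:ℕ) : ZMod N) from
        Finset.sum_congr rfl (fun x _ => by rw [hseg])]
      rw [sum_Icc_zmod N (fun z : ZMod N => if η z then 1 else 0)]
      rfl
    rw [W, if_pos hcond, hq]
    have hea : ((N:ℤ) - 1 - (p:ℤ)) = ((p - 1 : ℕ) : ℤ) := by
      have : 2 * (p:ℤ) = (N:ℤ) := by exact_mod_cast hp2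
      push_cast
      omega
    have heb : (-1 : ℤ) ≤ 2*(p:ℤ) - (N:ℤ) + 1 - (if toSeg (0:ZMod N) η 1 then 1 else 0)
        - (if toSeg (0:ZMod N) η N then 1 else 0) := by
      have e1 : (0:ℤ) ≤ (if toSeg (0:ZMod N) η 1 then (1:ℤ) else 0) ∧
          (if toSeg (0:ZMod N) η 1 then (1:ℤ) else 0) ≤ 1 := by constructor <;> split <;> norm_num
      have e2 : (0:ℤ) ≤ (if toSeg (0:ZMod N) η N then (1:ℤ) else 0) ∧
          (if toSeg (0:ZMod N) η N then (1:ℤ) else 0) ≤ 1 := by constructor <;> split <;> norm_num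
      have e3 : 2*(p:ℤ) = (N:ℤ) := by exact_mod_cast hp2
      omega
    have hb1 : ((2*ρ-1)/ρ) ^ (2*(p:ℤ) - (N:ℤ) + 1 - (if toSeg (0:ZMod N) η 1 then 1 else 0)
        - (if toSeg (0:ZMod N) η N then 1 else 0)) ≤ ((2*ρ-1)/ρ) ^ (-1 : ℤ) :=
      zpow_le_zpow_right_of_le_one₀ (b_pos hρ) (le_of_lt (b_lt_one hρ)) heb
    have ha1 : ((1-ρ)/ρ) ^ ((N:ℤ) - 1 - (p:ℤ)) = ((1-ρ)/ρ)⁻¹ * r^N := by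
      rw [hea, zpow_natCast]
      have hrn : r^N = ((1-ρ)/ρ)^p := by
        rw [← hp2, pow_mul, hr2]
      rw [hrn, show p = (p-1)+1 from by omega, pow_succ]
      have hane : ((1-ρ)/ρ) ≠ 0 := a_ne hρ
      rw [mul_comm (((1-ρ)/ρ)⁻¹), mul_assoc, mul_inv_cancel₀ hane, mul_one]
      congr 1
    refine le_trans (mul_le_mul_of_nonneg_left hb1 ?_) ?_
    · exact mul_nonneg (by linarith [one_sub_rho_pos hρ]) (le_of_lt (zpow_pos (a_pos hρ) _))
    · rw [ha1, zpow_neg_one, hK]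
      exact le_of_eq (by ring)
  calc (∑ η ∈ Bad, W ρ N (toSeg 0 η)) ≤ Bad.card • K :=
        Finset.sum_le_card_nsmul _ _ _ hWle
    _ = (Bad.card : ℝ) * K := nsmul_eq_mul _ _
    _ ≤ 2 * K := by
        apply mul_le_mul_of_nonneg_right _ hKnonneg
        exact_mod_cast hcard
    _ = 2 * ((1-ρ) * ((1-ρ)/ρ)⁻¹ * ((2*ρ-1)/ρ)⁻¹) * r^N := by rw [hK]; ring

end FEP

namespace FEP

/-- **Measure of the ergodic set:** `ν̃_{ρ,N}(𝓔_N)` is exponentially close to `ρ(2−ρ)`,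
and `ρ(2−ρ) > 3/4`. -/
theorem measure_of_ergodic_set (ρ : ℝ) (hρ : ρ ∈ Set.Ioo (1/2 : ℝ) 1) :
    (3/4 : ℝ) < ρ * (2 - ρ) ∧
    ∃ C C' : ℝ, 0 < C ∧ 0 < C' ∧
      ∀ (N : ℕ) [NeZero N], 1 ≤ N →
        |(∑ η : Config N, if η ∈ ergodicSet N then nutilde ρ N η else 0) - ρ * (2 - ρ)|
          ≤ C' * Real.exp (-C * N) := by
  constructor
  · nlinarith [mul_pos (show (0:ℝ) < ρ - 1/2 by linarith [hρ.1])
      (show (0:ℝ) < 3/2 - ρ by linarith [hρ.2])]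
  · set r := Real.sqrt ((1-ρ)/ρ) with hrdef
    have hrpos : 0 < r := Real.sqrt_pos.mpr (a_pos hρ)
    have hr2 : r^2 = (1-ρ)/ρ := Real.sq_sqrt (le_of_lt (a_pos hρ))
    have hr1 : r < 1 := by
      have h := Real.sqrt_lt_sqrt (le_of_lt (a_pos hρ)) (a_lt_one hρ)
      rwa [Real.sqrt_one] at h
    set coef := (1-ρ) * ((1-ρ)/ρ)⁻¹ * ((2*ρ-1)/ρ)⁻¹ with hcoefdef
    have hcoefpos : 0 < coef := by
      rw [hcoefdef]
      exact mul_pos (mul_pos (one_sub_rho_pos hρ) (inv_pos.mpr (a_pos hρ)))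
        (inv_pos.mpr (b_pos hρ))
    refine ⟨-Real.log r, (ρ*(1-ρ) + 2*coef)/r, ?_, ?_, ?_⟩
    · have := Real.log_neg hrpos hr1
      linarith
    · apply div_pos _ hrpos
      have t1 : 0 < ρ*(1-ρ) := mul_pos (rho_pos hρ) (one_sub_rho_pos hρ)
      linarith
    · intro N instN hN
      have hmain := main_sum hρ N hN
      have hbadle := bad_le hρ N hN
      have hbadnn : 0 ≤ (∑ η : Config N,
          if ((∀ x : ZMod N, η x = true ∨ η (x+1) = true) ∧ 2 * numParticles η ≤ N)
            then W ρ N (toSeg 0 η) else 0) := by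
        apply Finset.sum_nonneg
        intro η _
        split
        · exact W_nonneg hρ _ _
        · exact le_refl 0
      have hdecomp : (∑ η : Config N, if η ∈ ergodicSet N then W ρ N (toSeg 0 η) else 0)
          = (∑ η : Config N, if (∀ x : ZMod N, η x = true ∨ η (x+1) = true)
              then W ρ N (toSeg 0 η) else 0)
            - (∑ η : Config N,
                if ((∀ x : ZMod N, η x = true ∨ η (x+1) = true) ∧ 2 * numParticles η ≤ N)
                  then W ρ N (toSeg 0 η) else 0) := by
        rw [← Finset.sum_sub_distrib]
        apply Finset.sum_congr rfl
        intro η _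
        by_cases ht : ∀ x : ZMod N, η x = true ∨ η (x+1) = true
        · by_cases hc : N < 2 * numParticles η
          · rw [if_pos (show η ∈ ergodicSet N from ⟨ht, hc⟩), if_pos ht,
              if_neg (fun hh => absurd hh.2 (by omega))]
            ring
          · rw [if_neg (fun hh : η ∈ ergodicSet N => hc hh.2), if_pos ht,
              if_pos ⟨ht, by omega⟩]
            ring
        · rw [if_neg (fun hh : η ∈ ergodicSet N => ht hh.1), if_neg ht,
            if_neg (fun hh => ht hh.1)]
          ring
      rw [sum_nutilde, hdecomp, hmain]
      set B := (∑ η : Config N,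
          if ((∀ x : ZMod N, η x = true ∨ η (x+1) = true) ∧ 2 * numParticles η ≤ N)
            then W ρ N (toSeg 0 η) else 0) with hBdef
      have habs : ρ*(2-ρ) - ρ*(1-ρ)*(-((1-ρ)/ρ))^(N-1) - B - ρ*(2-ρ)
          = -(ρ*(1-ρ)*(-((1-ρ)/ρ))^(N-1) + B) := by ring
      rw [habs, abs_neg]
      have h1 : |ρ*(1-ρ)*(-((1-ρ)/ρ))^(N-1) + B|
          ≤ |ρ*(1-ρ)*(-((1-ρ)/ρ))^(N-1)| + |B| := abs_add_le _ _
      have h2 : |ρ*(1-ρ)*(-((1-ρ)/ρ))^(N-1)| = ρ*(1-ρ)*((1-ρ)/ρ)^(N-1) := by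
        rw [abs_mul, abs_of_pos (mul_pos (rho_pos hρ) (one_sub_rho_pos hρ)), abs_pow, abs_neg,
          abs_of_pos (a_pos hρ)]
      have h3 : |B| = B := abs_of_nonneg hbadnn
      have h4 : ((1-ρ)/ρ)^(N-1) = r^(2*(N-1)) := by rw [pow_mul, hr2]
      have h5 : r^(2*(N-1)) ≤ r^(N-1) :=
        pow_le_pow_of_le_one (le_of_lt hrpos) (le_of_lt hr1) (by omega)
      have h6 : r^N ≤ r^(N-1) :=
        pow_le_pow_of_le_one (le_of_lt hrpos) (le_of_lt hr1) (by omega)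
      have h7 : (ρ*(1-ρ) + 2*coef)/r * Real.exp (-(-Real.log r) * N)
          = (ρ*(1-ρ) + 2*coef) * r^(N-1) := by
        have hexp : Real.exp (-(-Real.log r) * N) = r^N := by
          rw [show -(-Real.log r)*(N:ℝ) = (N:ℝ)*Real.log r from by ring, Real.exp_nat_mul,
            Real.exp_log hrpos]
        rw [hexp]
        have hrn : r^N = r^(N-1)*r := by
          rw [← pow_succ]
          congr 1
          omega
        rw [hrn]
        field_simp
      rw [h7]
      have t1 : ρ*(1-ρ)*((1-ρ)/ρ)^(N-1) ≤ ρ*(1-ρ)*r^(N-1) := by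
        rw [h4]
        exact mul_le_mul_of_nonneg_left h5
          (le_of_lt (mul_pos (rho_pos hρ) (one_sub_rho_pos hρ)))
      have t2 : B ≤ 2*coef*r^(N-1) := by
        refine le_trans hbadle ?_
        rw [show 2 * ((1-ρ) * ((1-ρ)/ρ)⁻¹ * ((2*ρ-1)/ρ)⁻¹) * r^N = 2*coef*r^N from by
          rw [hcoefdef]]
        exact mul_le_mul_of_nonneg_left h6 (by linarith)
      calc |ρ*(1-ρ)*(-((1-ρ)/ρ))^(N-1) + B|
          ≤ |ρ*(1-ρ)*(-((1-ρ)/ρ))^(N-1)| + |B| := h1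
        _ = ρ*(1-ρ)*((1-ρ)/ρ)^(N-1) + B := by rw [h2, h3]
        _ ≤ ρ*(1-ρ)*r^(N-1) + 2*coef*r^(N-1) := by linarith
        _ = (ρ*(1-ρ) + 2*coef) * r^(N-1) := by ring

end FEP
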